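/- Fix real numbers t and y₀ satisfying the nonvanishing conditions of the setup and additionally 3y₀ − √3 ≠ 0. With P, Q, R and P'', Q'', R'' defined by the explicit formulas of the setup, the three lines PQ'', QR'', RP'' are concurrent: they all pass through the point (0, −(√3·y₀ + 3)/(3y₀ − √3)). -/

import Mathlib

open Complex


lemma collinear_of_det (a b c : ℂ)
    (h : (b.re - a.re) * (c.im - a.im) - (c.re - a.re) * (b.im - a.im) = 0) :
    Collinear ℝ ({a, b, c} : Set ℂ) := by
  rw [collinear_iff_exists_forall_eq_smul_vadd]
  by_cases hb : b = a
  · exact ⟨a, c - a, by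
      rintro p (rfl | rfl | rfl)
      · exact ⟨0, by simp⟩
      · exact ⟨0, by simp [hb]⟩
      · exact ⟨1, by simp⟩⟩
  · refine ⟨a, b - a, ?_⟩
    have key : ∀ r : ℝ, r • (b - a) + a = ⟨r * (b.re - a.re) + a.re, r * (b.im - a.im) + a.im⟩ := by
      intro r
      apply Complex.ext <;>
        simp [Complex.real_smul, Complex.ofReal_re, Complex.ofReal_im]
    rintro p (rfl | rfl | rfl)
    · exact ⟨0, by simp⟩
    · exact ⟨1, by simp⟩
    · by_cases hre : b.re - a.re = 0
      · have him : b.im - a.im ≠ 0 := fun h' =>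
          hb (Complex.ext (by linarith) (by linarith))
        have hz : (p.re - a.re) * (b.im - a.im) = 0 := by
          linear_combination (p.im - a.im) * hre - h
        have hcre : p.re - a.re = 0 := by
          rcases mul_eq_zero.1 hz with h' | h'
          · exact h'
          · exact absurd h' him
        refine ⟨(p.im - a.im) / (b.im - a.im), ?_⟩
        rw [vadd_eq_add, key, Complex.ext_iff]
        constructor
        · dsimp only
          rw [hre]
          ring_nf
          linarith
        · dsimp only
          field_simp
          ring
      · refine ⟨(p.re - a.re) / (b.re - a.re), ?_⟩
        rw [vadd_eq_add, key, Complex.ext_iff]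
        constructor
        · dsimp only
          field_simp
          ring
        · dsimp only
          field_simp
          linear_combination h


/-- Abbreviation for `√3`. -/
noncomputable def sqrt3 : ℝ := Real.sqrt 3

/-- `P = (−1 + 2(1−t²)/(1+t²), 4t/(1+t²))`, a point of the circle of center `(-1,0)`
and radius `2`. -/
noncomputable def Pt (t : ℝ) : ℂ :=
  ⟨-1 + 2 * (1 - t ^ 2) / (1 + t ^ 2), 4 * t / (1 + t ^ 2)⟩

/-- `Q = (−2(√3·t+1)/(t²+1), −(√3·t²+2t−√3)/(t²+1))`, obtained from `P` by a `120°`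
rotation about `(-1,0)`. -/
noncomputable def Qt (t : ℝ) : ℂ :=
  ⟨-2 * (sqrt3 * t + 1) / (t ^ 2 + 1), -(sqrt3 * t ^ 2 + 2 * t - sqrt3) / (t ^ 2 + 1)⟩

/-- `R = (2(√3·t−1)/(t²+1), (√3·t²−2t−√3)/(t²+1))`, obtained from `Q` by a `120°`
rotation about `(-1,0)`. -/
noncomputable def Rt (t : ℝ) : ℂ :=
  ⟨2 * (sqrt3 * t - 1) / (t ^ 2 + 1), (sqrt3 * t ^ 2 - 2 * t - sqrt3) / (t ^ 2 + 1)⟩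

/-- The point `z` lies on the conic `𝒦 : (3t²−1)x² + (2t³−6t)xy + (1−3t²)y² + (1−3t²) = 0`. -/
def OnK (t : ℝ) (z : ℂ) : Prop :=
  (3 * t ^ 2 - 1) * z.re ^ 2 + (2 * t ^ 3 - 6 * t) * z.re * z.im +
    (1 - 3 * t ^ 2) * z.im ^ 2 + (1 - 3 * t ^ 2) = 0

/-- First nonvanishing denominator factor `2t·y₀ − y₀² + 1`. -/
noncomputable def D₀ (t y : ℝ) : ℝ := 2 * t * y - y ^ 2 + 1

/-- Second nonvanishing denominator factor
`3t²y₀² + 2√3·t²y₀ − 3t² + 8t·y₀ − y₀² + 2√3·y₀ + 1`. -/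
noncomputable def D₁ (t y : ℝ) : ℝ :=
  3 * t ^ 2 * y ^ 2 + 2 * sqrt3 * t ^ 2 * y - 3 * t ^ 2 + 8 * t * y - y ^ 2 + 2 * sqrt3 * y + 1

/-- Third nonvanishing denominator factor
`3t²y₀² − 2√3·t²y₀ − 3t² + 8t·y₀ − y₀² − 2√3·y₀ + 1`. -/
noncomputable def D₂ (t y : ℝ) : ℝ :=
  3 * t ^ 2 * y ^ 2 - 2 * sqrt3 * t ^ 2 * y - 3 * t ^ 2 + 8 * t * y - y ^ 2 - 2 * sqrt3 * y + 1

/-- The point `P''` of the setup of Theorem 2. -/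
noncomputable def Ppp (t y : ℝ) : ℂ :=
  ⟨(3 * t ^ 2 - 1) * (y ^ 2 + 1) / ((t ^ 2 + 1) * D₀ t y),
   2 * (t ^ 2 * y + 2 * t - y) * (t * y - 1) / ((t ^ 2 + 1) * D₀ t y)⟩

/-- The point `Q''` of the setup of Theorem 2. -/
noncomputable def Qpp (t y : ℝ) : ℂ :=
  ⟨-2 * (3 * sqrt3 * t ^ 3 + 3 * t ^ 2 - sqrt3 * t - 1) * (y ^ 2 + 1) / (D₁ t y * (t ^ 2 + 1)),
   -(sqrt3 * t ^ 4 * y ^ 2 + 6 * t ^ 4 * y - 2 * t ^ 3 * y ^ 2 + 3 * sqrt3 * t ^ 4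
     - 8 * sqrt3 * t ^ 2 * y ^ 2 + 6 * t ^ 3 + 4 * t ^ 2 * y - 10 * t * y ^ 2
     - 4 * sqrt3 * t ^ 2 - sqrt3 * y ^ 2 - 2 * t - 2 * y + sqrt3) / (D₁ t y * (t ^ 2 + 1))⟩

/-- The point `R''` of the setup of Theorem 2. -/
noncomputable def Rpp (t y : ℝ) : ℂ :=
  ⟨2 * (3 * sqrt3 * t ^ 3 - 3 * t ^ 2 - sqrt3 * t + 1) * (y ^ 2 + 1) / (D₂ t y * (t ^ 2 + 1)),
   (sqrt3 * t ^ 4 * y ^ 2 - 6 * t ^ 4 * y + 2 * t ^ 3 * y ^ 2 + 3 * sqrt3 * t ^ 4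
     - 8 * sqrt3 * t ^ 2 * y ^ 2 - 6 * t ^ 3 - 4 * t ^ 2 * y + 10 * t * y ^ 2
     - 4 * sqrt3 * t ^ 2 - sqrt3 * y ^ 2 + 2 * t + 2 * y + sqrt3) / (D₂ t y * (t ^ 2 + 1))⟩

/-- The three lines `PQ''`, `QR''`, `RP''` are concurrent at `(0, −(√3·y₀+3)/(3y₀−√3))`. -/
theorem second_perspector (t y₀ : ℝ)
    (h₀ : D₀ t y₀ ≠ 0) (h₁ : D₁ t y₀ ≠ 0) (h₂ : D₂ t y₀ ≠ 0)
    (h₃ : 3 * y₀ - sqrt3 ≠ 0) :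
    Collinear ℝ ({Pt t, Qpp t y₀, (⟨0, -(sqrt3 * y₀ + 3) / (3 * y₀ - sqrt3)⟩ : ℂ)} : Set ℂ) ∧
    Collinear ℝ ({Qt t, Rpp t y₀, (⟨0, -(sqrt3 * y₀ + 3) / (3 * y₀ - sqrt3)⟩ : ℂ)} : Set ℂ) ∧
    Collinear ℝ ({Rt t, Ppp t y₀, (⟨0, -(sqrt3 * y₀ + 3) / (3 * y₀ - sqrt3)⟩ : ℂ)} : Set ℂ) := by
  
  have ht : (t:ℝ) ^ 2 + 1 ≠ 0 := by positivity
  have ht' : (1:ℝ) + t ^ 2 ≠ 0 := by positivity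
  have hs : sqrt3 ^ 2 = 3 := Real.sq_sqrt (by norm_num)
  simp only [D₀, D₁, D₂] at h₀ h₁ h₂
  refine ⟨collinear_of_det _ _ _ ?_, collinear_of_det _ _ _ ?_, collinear_of_det _ _ _ ?_⟩
  · simp only [Pt, Qpp, D₁]
    have h₁' : t * (t * (y₀ * (3 * y₀ + 2 * sqrt3) - 3) + y₀ * 8) - y₀ ^ 2 + 2 * sqrt3 * y₀ + 1 ≠ 0 := by
      convert h₁ using 1; ring
    field_simp
    ring_nf
    simp only [hs, show sqrt3 ^ 3 = 3 * sqrt3 by rw [pow_succ, hs], show sqrt3 ^ 4 = 9 by rw [show sqrt3 ^ 4 = (sqrt3 ^ 2) ^ 2 by ring, hs]; norm_num, show sqrt3 ^ 5 = 9 * sqrt3 by rw [show sqrt3 ^ 5 = (sqrt3 ^ 2) ^ 2 * sqrt3 by ring, hs]; norm_num, show sqrt3 ^ 6 = 27 by rw [show sqrt3 ^ 6 = (sqrt3 ^ 2) ^ 3 by ring, hs]; norm_num]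
    ring_nf
  · simp only [Qt, Rpp, D₂]
    have h₂' : t * (t * (y₀ * (3 * y₀ - 2 * sqrt3) - 3) + y₀ * 8) - y₀ ^ 2 - 2 * sqrt3 * y₀ + 1 ≠ 0 := by
      convert h₂ using 1; ring
    field_simp
    ring_nf
    simp only [hs, show sqrt3 ^ 3 = 3 * sqrt3 by rw [pow_succ, hs], show sqrt3 ^ 4 = 9 by rw [show sqrt3 ^ 4 = (sqrt3 ^ 2) ^ 2 by ring, hs]; norm_num, show sqrt3 ^ 5 = 9 * sqrt3 by rw [show sqrt3 ^ 5 = (sqrt3 ^ 2) ^ 2 * sqrt3 by ring, hs]; norm_num, show sqrt3 ^ 6 = 27 by rw [show sqrt3 ^ 6 = (sqrt3 ^ 2) ^ 3 by ring, hs]; norm_num]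
    ring_nf
  · simp only [Rt, Ppp, D₀]
    have h₀' : y₀ * (t * 2 - y₀) + 1 ≠ 0 := by
      convert h₀ using 1; ring
    field_simp
    ring_nf
    simp only [hs, show sqrt3 ^ 3 = 3 * sqrt3 by rw [pow_succ, hs], show sqrt3 ^ 4 = 9 by rw [show sqrt3 ^ 4 = (sqrt3 ^ 2) ^ 2 by ring, hs]; norm_num, show sqrt3 ^ 5 = 9 * sqrt3 by rw [show sqrt3 ^ 5 = (sqrt3 ^ 2) ^ 2 * sqrt3 by ring, hs]; norm_num, show sqrt3 ^ 6 = 27 by rw [show sqrt3 ^ 6 = (sqrt3 ^ 2) ^ 3 by ring, hs]; norm_num]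
    ring_nf
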